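/- There exists N such that for every n ≥ N, the complete bipartite graph G = K_{⌊n/3⌋,⌈2n/3⌉} satisfies λ1(G) + λ1(Ḡ) > 1.1·n; consequently, the maximum of λ1(H) + λ1(H̄) over all graphs H on n vertices exceeds 1.1·n. -/

import Mathlib

open scoped Classical


/-- The adjacency matrix of a simple graph on `Fin n`, over `ℝ`. -/
noncomputable def adjMat {n : ℕ} (G : SimpleGraph (Fin n)) : Matrix (Fin n) (Fin n) ℝ :=
  letI : DecidableRel G.Adj := Classical.decRel _
  G.adjMatrix ℝ

/-- The set of eigenvalues of a real square matrix. -/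
def eigSet {n : ℕ} (M : Matrix (Fin n) (Fin n) ℝ) : Set ℝ :=
  {mu : ℝ | ∃ x : Fin n → ℝ, x ≠ 0 ∧ M.mulVec x = mu • x}

/-- The largest eigenvalue of a real square matrix. -/
noncomputable def lamMax {n : ℕ} (M : Matrix (Fin n) (Fin n) ℝ) : ℝ := sSup (eigSet M)

/-- The least eigenvalue of a real square matrix. -/
noncomputable def lamMin {n : ℕ} (M : Matrix (Fin n) (Fin n) ℝ) : ℝ := sInf (eigSet M)

/-- `λ₁(G)`: the largest adjacency eigenvalue of `G`. -/
noncomputable def lam1 {n : ℕ} (G : SimpleGraph (Fin n)) : ℝ := lamMax (adjMat G)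

/-- The degree of a vertex. -/
noncomputable def deg {n : ℕ} (G : SimpleGraph (Fin n)) (v : Fin n) : ℕ :=
  Nat.card {u : Fin n // G.Adj v u}

/-- The signless Laplacian `Q(G) = D(G) + A(G)`. -/
noncomputable def signlessLap {n : ℕ} (G : SimpleGraph (Fin n)) : Matrix (Fin n) (Fin n) ℝ :=
  Matrix.diagonal (fun v => (deg G v : ℝ)) + adjMat G

/-- `q₁(G)`: the largest signless Laplacian eigenvalue. -/
noncomputable def q1 {n : ℕ} (G : SimpleGraph (Fin n)) : ℝ := lamMax (signlessLap G)

/-- `qₙ(G)`: the least signless Laplacian eigenvalue. -/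
noncomputable def qmin {n : ℕ} (G : SimpleGraph (Fin n)) : ℝ := lamMin (signlessLap G)

/-- The `Q`-spread `s_Q(G) = q₁(G) - qₙ(G)`. -/
noncomputable def sQ {n : ℕ} (G : SimpleGraph (Fin n)) : ℝ := q1 G - qmin G

/-- The complete split graph `CS_{n,ω}`: a clique on the first `ω` vertices, completely
joined to an independent set on the remaining `n - ω` vertices. -/
def CS (n w : ℕ) : SimpleGraph (Fin n) where
  Adj u v := u ≠ v ∧ ((u : ℕ) < w ∨ (v : ℕ) < w)
  symm := by constructor; intro u v h; exact ⟨h.1.symm, h.2.symm⟩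
  loopless := by constructor; intro u h; exact h.1 rfl

/-- `K_{n-1}^+`: the complete graph on the first `n-1` vertices together with a pendant
vertex (the last vertex) joined to exactly one clique vertex (vertex `0`). -/
def KPlus (n : ℕ) : SimpleGraph (Fin n) where
  Adj u v := u ≠ v ∧ (((u : ℕ) < n - 1 ∧ (v : ℕ) < n - 1) ∨ (u : ℕ) = 0 ∨ (v : ℕ) = 0)
  symm := by constructor; intro u v h; refine ⟨h.1.symm, ?_⟩; tauto
  loopless := by constructor; intro u h; exact h.1 rfl

/-- The complete bipartite graph `K_{⌊n/3⌋, ⌈2n/3⌉}` realized on `Fin n`, with parts the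
first `⌊n/3⌋` vertices and the remaining `⌈2n/3⌉` vertices. -/
def bip (n : ℕ) : SimpleGraph (Fin n) where
  Adj u v := ((u : ℕ) < n / 3 ∧ ¬ (v : ℕ) < n / 3) ∨ ((v : ℕ) < n / 3 ∧ ¬ (u : ℕ) < n / 3)
  symm := by constructor; intro u v h; tauto
  loopless := by constructor; intro u h; tauto

open scoped Classical in
lemma adjMat_apply {n : ℕ} (G : SimpleGraph (Fin n)) (i j : Fin n) :
    adjMat G i j = if G.Adj i j then 1 else 0 := by
  simp [adjMat]

lemma adjMat_mulVec {n : ℕ} (G : SimpleGraph (Fin n)) (x : Fin n → ℝ) (i : Fin n) :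
    (adjMat G).mulVec x i = ∑ j, (if G.Adj i j then (1:ℝ) else 0) * x j := by
  simp [Matrix.mulVec, dotProduct, adjMat_apply]

lemma eig_le {n : ℕ} (G : SimpleGraph (Fin n)) {μ : ℝ} (h : μ ∈ eigSet (adjMat G)) :
    μ ≤ n := by
  obtain ⟨x, hx, hMx⟩ := h
  obtain ⟨j0, hj0⟩ : ∃ j, x j ≠ 0 := by
    by_contra hc; push_neg at hc; exact hx (funext hc)
  obtain ⟨i, -, hi⟩ := Finset.exists_max_image Finset.univ (fun i => |x i|)
    ⟨j0, Finset.mem_univ _⟩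
  have hxi : 0 < |x i| := lt_of_lt_of_le (abs_pos.mpr hj0) (hi j0 (Finset.mem_univ _))
  have h1 : μ * x i = ∑ j, (if G.Adj i j then (1:ℝ) else 0) * x j := by
    have := congrFun hMx i
    rw [adjMat_mulVec] at this
    simpa using this.symm
  have key : |μ| * |x i| ≤ n * |x i| := by
    calc |μ| * |x i| = |μ * x i| := (abs_mul μ (x i)).symm
      _ = |∑ j, (if G.Adj i j then (1:ℝ) else 0) * x j| := by rw [h1]
      _ ≤ ∑ j, |(if G.Adj i j then (1:ℝ) else 0) * x j| := Finset.abs_sum_le_sum_abs _ _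
      _ ≤ ∑ _j : Fin n, |x i| := by
          apply Finset.sum_le_sum; intro j _
          rw [abs_mul]
          have h2 : |if G.Adj i j then (1:ℝ) else 0| ≤ 1 := by split_ifs <;> simp
          calc |if G.Adj i j then (1:ℝ) else 0| * |x j| ≤ 1 * |x i| :=
                mul_le_mul h2 (hi j (Finset.mem_univ _)) (abs_nonneg _) zero_le_one
            _ = |x i| := one_mul _
      _ = n * |x i| := by simp [Finset.sum_const, Finset.card_univ, nsmul_eq_mul]
  have : |μ| ≤ n := le_of_mul_le_mul_right key hxi
  exact le_trans (le_abs_self μ) this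

lemma lam1_ge {n : ℕ} (G : SimpleGraph (Fin n)) {μ : ℝ} (h : μ ∈ eigSet (adjMat G)) :
    μ ≤ lam1 G :=
  le_csSup ⟨n, fun _ hm => eig_le G hm⟩ h

lemma card_lt_fin (n a : ℕ) (h : a < n) :
    (Finset.univ.filter fun j : Fin n => (j : ℕ) < a).card = a := by
  have e : (Finset.univ.filter fun j : Fin n => (j : ℕ) < a) = Finset.Iio (⟨a, h⟩ : Fin n) := by
    ext j; simp [Fin.lt_def]
  rw [e, Fin.card_Iio]

lemma card_not_lt_fin (n a : ℕ) (h : a < n) :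
    (Finset.univ.filter fun j : Fin n => ¬ (j : ℕ) < a).card = n - a := by
  have h2 := Finset.card_filter_add_card_filter_not
    (s := (Finset.univ : Finset (Fin n))) (p := fun j : Fin n => (j : ℕ) < a)
  rw [Finset.card_univ, Fintype.card_fin, card_lt_fin n a h] at h2
  omega

lemma bip_eig (n : ℕ) (hn : 3 ≤ n) :
    Real.sqrt (((n / 3 : ℕ) : ℝ) * ((n - n / 3 : ℕ) : ℝ)) ∈ eigSet (adjMat (bip n)) := by
  set a := n / 3 with ha
  set b := n - a with hb
  have ha1 : 1 ≤ a := by omega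
  have han : a < n := by omega
  have hb1 : 1 ≤ b := by omega
  refine ⟨fun i => if (i : ℕ) < a then Real.sqrt b else Real.sqrt a, ?_, ?_⟩
  · intro h0
    have h1 := congrFun h0 ⟨0, by omega⟩
    simp only [show ((⟨0, by omega⟩ : Fin n) : ℕ) < a from ha1, if_pos, Pi.zero_apply] at h1
    have h2 : (0:ℝ) < Real.sqrt b := Real.sqrt_pos.mpr (by exact_mod_cast hb1)
    exact absurd h1 (ne_of_gt h2)
  · funext i
    rw [adjMat_mulVec]
    have hsab : Real.sqrt ((a:ℝ) * (b:ℝ)) = Real.sqrt a * Real.sqrt b :=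
      Real.sqrt_mul (Nat.cast_nonneg _) _
    by_cases hia : (i : ℕ) < a
    · have hsum : ∑ j, (if (bip n).Adj i j then (1:ℝ) else 0) *
          (if (j : ℕ) < a then Real.sqrt b else Real.sqrt a)
          = ∑ j : Fin n, (if ¬ (j : ℕ) < a then Real.sqrt a else 0) := by
        apply Finset.sum_congr rfl; intro j _
        by_cases hja : (j : ℕ) < a <;> simp [bip, ← ha, hia, hja]
      refine hsum.trans ?_
      rw [← Finset.sum_filter, Finset.sum_const, card_not_lt_fin n a han, nsmul_eq_mul]
      have h2 : ((n - a : ℕ) : ℝ) = (b : ℝ) := by rw [hb]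
      rw [h2]
      show (b:ℝ) * Real.sqrt a = Real.sqrt ((a:ℝ) * (b:ℝ)) * (if (i:ℕ) < a then Real.sqrt b else Real.sqrt a)
      rw [if_pos hia, hsab, mul_assoc, Real.mul_self_sqrt (Nat.cast_nonneg _)]
      ring
    · have hsum : ∑ j, (if (bip n).Adj i j then (1:ℝ) else 0) *
          (if (j : ℕ) < a then Real.sqrt b else Real.sqrt a)
          = ∑ j : Fin n, (if (j : ℕ) < a then Real.sqrt b else 0) := by
        apply Finset.sum_congr rfl; intro j _
        by_cases hja : (j : ℕ) < a <;> simp [bip, ← ha, hia, hja]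
      refine hsum.trans ?_
      rw [← Finset.sum_filter, Finset.sum_const, card_lt_fin n a han, nsmul_eq_mul]
      show (a:ℝ) * Real.sqrt b = Real.sqrt ((a:ℝ) * (b:ℝ)) * (if (i:ℕ) < a then Real.sqrt b else Real.sqrt a)
      rw [if_neg hia, hsab, show Real.sqrt (a:ℝ) * Real.sqrt (b:ℝ) * Real.sqrt (a:ℝ)
          = Real.sqrt (a:ℝ) * Real.sqrt (a:ℝ) * Real.sqrt (b:ℝ) by ring,
        Real.mul_self_sqrt (Nat.cast_nonneg _)]

lemma bipc_eig (n : ℕ) (hn : 3 ≤ n) :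
    ((n - n / 3 : ℕ) : ℝ) - 1 ∈ eigSet (adjMat (bip n)ᶜ) := by
  set a := n / 3 with ha
  set b := n - a with hb
  have ha1 : 1 ≤ a := by omega
  have han : a < n := by omega
  have hb1 : 1 ≤ b := by omega
  refine ⟨fun i => if (i : ℕ) < a then 0 else 1, ?_, ?_⟩
  · intro h0
    have h1 := congrFun h0 ⟨n - 1, by omega⟩
    simp only [show ¬ ((⟨n - 1, by omega⟩ : Fin n) : ℕ) < a from by simp; omega,
      if_neg, Pi.zero_apply] at h1
    exact one_ne_zero h1
  · funext i
    rw [adjMat_mulVec]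
    by_cases hia : (i : ℕ) < a
    · have hsum : ∑ j, (@ite ℝ ((bip n)ᶜ.Adj i j) (Classical.propDecidable _) (1:ℝ) 0) *
          (if (j : ℕ) < a then (0:ℝ) else 1) = 0 := by
        apply Finset.sum_eq_zero; intro j _
        by_cases hja : (j : ℕ) < a
        · simp [hja]
        · simp [SimpleGraph.compl_adj, bip, ← ha, hia, hja]
      refine hsum.trans ?_
      show (0:ℝ) = ((b:ℝ) - 1) * (if (i:ℕ) < a then (0:ℝ) else 1)
      rw [if_pos hia, mul_zero]
    · have hsum : ∑ j, (@ite ℝ ((bip n)ᶜ.Adj i j) (Classical.propDecidable _) (1:ℝ) 0) *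
          (if (j : ℕ) < a then (0:ℝ) else 1)
          = ∑ j : Fin n, (if ¬ (j : ℕ) < a ∧ j ≠ i then (1:ℝ) else 0) := by
        apply Finset.sum_congr rfl; intro j _
        by_cases hja : (j : ℕ) < a
        · simp [hja]
        · by_cases hji : j = i
          · subst hji; simp [hja]
          · have hij : ¬ i = j := fun h => hji h.symm
            simp [SimpleGraph.compl_adj, bip, ← ha, hia, hja, hji, hij]
      have hcard : (Finset.univ.filter fun j : Fin n => ¬ (j : ℕ) < a ∧ j ≠ i).card
          = b - 1 := by
        have e : (Finset.univ.filter fun j : Fin n => ¬ (j : ℕ) < a ∧ j ≠ i)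
            = (Finset.univ.filter fun j : Fin n => ¬ (j : ℕ) < a).erase i := by
          ext j
          simp only [Finset.mem_filter, Finset.mem_erase, Finset.mem_univ, true_and]
          tauto
        rw [e, Finset.card_erase_of_mem (by simp only [Finset.mem_filter, Finset.mem_univ, true_and]; exact hia), card_not_lt_fin n a han]
      refine hsum.trans ?_
      rw [Finset.sum_boole, hcard]
      show ((b - 1 : ℕ) : ℝ) = ((b:ℝ) - 1) * (if (i:ℕ) < a then (0:ℝ) else 1)
      rw [if_neg hia, mul_one, Nat.cast_sub hb1, Nat.cast_one]

theorem stmt19 :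
    ∃ N : ℕ, ∀ n : ℕ, N ≤ n →
      1.1 * (n : ℝ) < lam1 (bip n) + lam1 (bip n)ᶜ ∧
      ∃ H : SimpleGraph (Fin n), 1.1 * (n : ℝ) < lam1 H + lam1 Hᶜ := by
  refine ⟨100, fun n hn => ?_⟩
  have h3 : 3 ≤ n := by omega
  have key : 1.1 * (n : ℝ) < lam1 (bip n) + lam1 (bip n)ᶜ := by
    have h1 := lam1_ge (bip n) (bip_eig n h3)
    have h2 := lam1_ge (bip n)ᶜ (bipc_eig n h3)
    set a := n / 3 with ha
    set b := n - a with hb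
    have hbR : (b : ℝ) = (n : ℝ) - (a : ℝ) := by
      rw [hb, Nat.cast_sub (by omega : a ≤ n)]
    have h3a : 3 * (a : ℝ) ≤ (n : ℝ) := by exact_mod_cast (by omega : 3 * a ≤ n)
    have h3a' : (n : ℝ) ≤ 3 * (a : ℝ) + 2 := by exact_mod_cast (by omega : n ≤ 3 * a + 2)
    have hn' : (100 : ℝ) ≤ (n : ℝ) := by exact_mod_cast hn
    have hc : ((a : ℝ) + 0.1 * (n : ℝ) + 1) < Real.sqrt ((a : ℝ) * (b : ℝ)) := by
      rw [Real.lt_sqrt (by positivity)]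
      nlinarith [mul_nonneg (by linarith : (0:ℝ) ≤ 3 * (a:ℝ) - ((n:ℝ) - 2))
        (by linarith : (0:ℝ) ≤ (n:ℝ) - 3 * (a:ℝ)), sq_nonneg ((n:ℝ) - 3 * (a:ℝ))]
    linarith [h1, h2]
  exact ⟨key, bip n, key⟩
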